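/- Let h(j) = a*j^2 + b*j + e be a function from ℤ≥0 to ℤ≥0 with integers a > 0, e > 0, b < 0, and b^2 ≤ 4*a*e. Then hdepth(h) ≤ 11, i.e., for every d ≥ 12 there exists 0 ≤ k ≤ d with ∑_{j=0}^k (-1)^{k-j} C(d-j, k-j) h(j) < 0. -/

import Mathlib

set_option maxHeartbeats 1000000 in
lemma stmt_9_key (a b e D : ℤ) (ha : 0 < a) (he : 0 < e) (hb : b < 0)
    (hd : b ^ 2 ≤ 4 * a * e) (hD12 : (12 : ℤ) ≤ D)
    (hc : 0 ≤ a + b + e - D * e) :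
    D * (D - 1) * e - 2 * (D - 1) * (a + b + e) + 2 * (4 * a + 2 * b + e) < 0 := by
  by_contra hS2nn
  push_neg at hS2nn
  have hA : e * (D ^ 2 - 9 * D + 6) ≤ 4 * (-b) := by
    nlinarith [mul_nonneg hc (by linarith : (0:ℤ) ≤ 2 * (D - 5))]
  have hB : (2 * D - 10) * b ^ 2 ≤ 4 * e * ((2 * D - 6) * (-b) + e * (D ^ 2 - 3 * D + 4)) := by
    nlinarith [mul_nonneg (by linarith : (0:ℤ) ≤ 4 * a * e - b ^ 2)
        (by linarith : (0:ℤ) ≤ 2 * D - 10),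
      mul_nonneg hS2nn (by linarith : (0:ℤ) ≤ 4 * e)]
  have hx1 : (1 : ℤ) ≤ -b := by linarith
  have hC : (2 * D - 10) * (-b) * (e * (D ^ 2 - 9 * D + 6)) ≤
      16 * e * ((2 * D - 6) * (-b) + e * (D ^ 2 - 3 * D + 4)) := by
    nlinarith [mul_nonneg (by linarith : (0:ℤ) ≤ 4 * (-b) - e * (D ^ 2 - 9 * D + 6))
      (mul_nonneg (by linarith : (0:ℤ) ≤ 2 * D - 10) (by linarith : (0:ℤ) ≤ -b))]
  have hQ : 0 ≤ (2 * D - 10) * (D ^ 2 - 9 * D + 6) - 32 * D + 96 := by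
    nlinarith [mul_nonneg (mul_nonneg (by linarith : (0:ℤ) ≤ D - 12)
      (by linarith : (0:ℤ) ≤ D - 12)) (by linarith : (0:ℤ) ≤ D - 12),
      mul_nonneg (by linarith : (0:ℤ) ≤ D - 12) (by linarith : (0:ℤ) ≤ D - 12)]
  have hE : (-b) * ((2 * D - 10) * (D ^ 2 - 9 * D + 6) - 32 * D + 96)
      ≤ 16 * e * (D ^ 2 - 3 * D + 4) := by
    have h1 : e * ((-b) * ((2 * D - 10) * (D ^ 2 - 9 * D + 6) - 32 * D + 96))
        ≤ e * (16 * e * (D ^ 2 - 3 * D + 4)) := by nlinarith [hC]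
    exact le_of_mul_le_mul_left h1 he
  have hF : e * ((D ^ 2 - 9 * D + 6) * ((2 * D - 10) * (D ^ 2 - 9 * D + 6) - 32 * D + 96))
      ≤ e * (64 * (D ^ 2 - 3 * D + 4)) := by
    have h2 := mul_le_mul_of_nonneg_right hA hQ
    nlinarith [hE]
  have hG := le_of_mul_le_mul_left hF he
  nlinarith [mul_pos (by linarith : (0:ℤ) < D - 11)
      (mul_pos (mul_pos (mul_pos (by linarith : (0:ℤ) < D - 11) (by linarith : (0:ℤ) < D - 11))
        (by linarith : (0:ℤ) < D - 11)) (by linarith : (0:ℤ) < D - 11)),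
    mul_pos (mul_pos (mul_pos (by linarith : (0:ℤ) < D - 11) (by linarith : (0:ℤ) < D - 11))
      (by linarith : (0:ℤ) < D - 11)) (by linarith : (0:ℤ) < D - 11),
    mul_pos (mul_pos (by linarith : (0:ℤ) < D - 11) (by linarith : (0:ℤ) < D - 11))
      (by linarith : (0:ℤ) < D - 11),
    mul_pos (by linarith : (0:ℤ) < D - 11) (by linarith : (0:ℤ) < D - 11)]

theorem stmt_9 (a b e : ℤ) (ha : 0 < a) (he : 0 < e) (hb : b < 0)
    (hd : b ^ 2 ≤ 4 * a * e)
    (h : ℕ → ℤ) (hh : ∀ j : ℕ, h j = a * j ^ 2 + b * j + e)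
    (hnn : ∀ j : ℕ, 0 ≤ h j) :
    ∀ d : ℕ, 12 ≤ d → ∃ k : ℕ, k ≤ d ∧
      (∑ j ∈ Finset.range (k + 1), (-1 : ℤ) ^ (k - j) * (Nat.choose (d - j) (k - j)) * h j) < 0 := by
  intro d hd12
  set D : ℤ := (d : ℤ) with hD
  have hD12 : (12 : ℤ) ≤ D := by simp only [hD]; exact_mod_cast hd12
  -- value of the sum for k = 1
  have hS1 : (∑ j ∈ Finset.range (1 + 1), (-1 : ℤ) ^ (1 - j) * (Nat.choose (d - j) (1 - j)) * h j)
      = (a + b + e) - D * e := by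
    simp [Finset.sum_range_succ, hh, Nat.choose_one_right]
    push_cast
    ring
  -- value of the sum for k = 2
  have hch2 : ((d.choose 2 : ℤ)) * 2 = D * (D - 1) := by
    have h1 : 1 ≤ d := by omega
    have : d.choose 2 * 2 = d * (d - 1) := by
      rw [Nat.choose_two_right]
      rw [Nat.div_mul_cancel]
      exact (Nat.even_mul_pred_self d).two_dvd
    have := congrArg (Nat.cast : ℕ → ℤ) this
    push_cast at this
    rw [this]
    have : ((d - 1 : ℕ) : ℤ) = D - 1 := by
      push_cast [h1]; ring
    rw [this]
  have hd1 : ((d - 1 : ℕ) : ℤ) = D - 1 := by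
    have h1 : 1 ≤ d := by omega
    push_cast [h1]; ring
  have hS2 : (∑ j ∈ Finset.range (2 + 1), (-1 : ℤ) ^ (2 - j) * (Nat.choose (d - j) (2 - j)) * h j) * 2
      = D * (D - 1) * e - 2 * (D - 1) * (a + b + e) + 2 * (4 * a + 2 * b + e) := by
    rw [Finset.sum_range_succ, Finset.sum_range_succ, Finset.sum_range_succ,
      Finset.sum_range_zero]
    simp only [hh]
    norm_num [Nat.choose_one_right]
    rw [hd1]
    push_cast
    linear_combination e * hch2
  by_cases hc : (a + b + e) - D * e < 0
  · exact ⟨1, by omega, by rw [hS1]; exact hc⟩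
  · refine ⟨2, by omega, ?_⟩
    push_neg at hc
    -- show the k = 2 sum is negative; work with twice the sum
    have key : D * (D - 1) * e - 2 * (D - 1) * (a + b + e) + 2 * (4 * a + 2 * b + e) < 0 :=
      stmt_9_key a b e D ha he hb hd hD12 hc
    linarith [hS2]
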